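/- For any natural number f with f ≠ 0, the number g defined by g := f; g := g OR (g >> 1); g := g OR (g >> 2); g := g OR (g >> 4); g := g OR (g >> 8); g := g OR (g >> 16); g := g OR (g >> 32); g := g + 1 (with all operations on 64-bit values, f < 2^64) equals 2^(k+1) where k is the position of the highest set bit of f, i.e., g is the smallest power of two strictly greater than f. -/

import Mathlib

private def smear (f : ℕ) : ℕ → ℕ
  | 0 => f
  | k + 1 => smear f k ||| (smear f k >>> 2 ^ k)

private lemma smear_testBit (f : ℕ) : ∀ k i, (smear f k).testBit i = true ↔
    ∃ s < 2 ^ k, f.testBit (i + s) = true := by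
  intro k
  induction k with
  | zero => intro i; simp [smear]
  | succ k ih =>
    intro i
    simp only [smear, Nat.testBit_or, Nat.testBit_shiftRight, Bool.or_eq_true, ih]
    constructor
    · rintro (⟨s, hs, h⟩ | ⟨s, hs, h⟩)
      · exact ⟨s, by omega, h⟩
      · refine ⟨2 ^ k + s, by have := Nat.pow_succ 2 k; omega, ?_⟩
        rw [show i + (2 ^ k + s) = 2 ^ k + i + s from by omega]
        exact h
    · rintro ⟨s, hs, h⟩
      by_cases hle : s < 2 ^ k
      · exact Or.inl ⟨s, hle, h⟩
      · refine Or.inr ⟨s - 2 ^ k, by have := Nat.pow_succ 2 k; omega, ?_⟩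
        rw [show 2 ^ k + i + (s - 2 ^ k) = i + s from by omega]
        exact h

/-- The bit-smearing trick: for `0 < f < 2^64`, or-ing `f` with its right shifts by
1, 2, 4, 8, 16, 32 and adding one yields the smallest power of two strictly
exceeding `f`, namely `2 ^ (Nat.log2 f + 1)`. -/
theorem smear_smallest_power_of_two (f : ℕ) (h0 : 0 < f) (h64 : f < 2 ^ 64) :
    (let g1 := f ||| (f >>> 1);
     let g2 := g1 ||| (g1 >>> 2);
     let g3 := g2 ||| (g2 >>> 4);
     let g4 := g3 ||| (g3 >>> 8);
     let g5 := g4 ||| (g4 >>> 16);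
     let g6 := g5 ||| (g5 >>> 32);
     g6 + 1) = 2 ^ (Nat.log2 f + 1) := by
  simp only
  set k0 := Nat.log2 f with hk0
  have hfne : f ≠ 0 := h0.ne'
  have hlow : 2 ^ k0 ≤ f := Nat.log2_self_le hfne
  have hhigh : f < 2 ^ (k0 + 1) := Nat.lt_log2_self
  have hk63 : k0 ≤ 63 := by
    by_contra h
    have : 2 ^ 64 ≤ 2 ^ k0 := Nat.pow_le_pow_right (by norm_num) (by omega)
    omega
  have hsmear : (f ||| f >>> 1 ||| (f ||| f >>> 1) >>> 2 |||
      (f ||| f >>> 1 ||| (f ||| f >>> 1) >>> 2) >>> 4 |||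
      (f ||| f >>> 1 ||| (f ||| f >>> 1) >>> 2 |||
        (f ||| f >>> 1 ||| (f ||| f >>> 1) >>> 2) >>> 4) >>> 8 |||
      (f ||| f >>> 1 ||| (f ||| f >>> 1) >>> 2 |||
        (f ||| f >>> 1 ||| (f ||| f >>> 1) >>> 2) >>> 4 |||
        (f ||| f >>> 1 ||| (f ||| f >>> 1) >>> 2 |||
          (f ||| f >>> 1 ||| (f ||| f >>> 1) >>> 2) >>> 4) >>> 8) >>> 16 |||
      (f ||| f >>> 1 ||| (f ||| f >>> 1) >>> 2 |||
        (f ||| f >>> 1 ||| (f ||| f >>> 1) >>> 2) >>> 4 |||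
        (f ||| f >>> 1 ||| (f ||| f >>> 1) >>> 2 |||
          (f ||| f >>> 1 ||| (f ||| f >>> 1) >>> 2) >>> 4) >>> 8 |||
        (f ||| f >>> 1 ||| (f ||| f >>> 1) >>> 2 |||
          (f ||| f >>> 1 ||| (f ||| f >>> 1) >>> 2) >>> 4 |||
          (f ||| f >>> 1 ||| (f ||| f >>> 1) >>> 2 |||
            (f ||| f >>> 1 ||| (f ||| f >>> 1) >>> 2) >>> 4) >>> 8) >>> 16) >>> 32)
      = smear f 6 := by
    simp [smear]
  rw [hsmear]
  have htop : f.testBit k0 = true := by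
    rw [Nat.testBit_eq_decide_div_mod_eq]
    have h1 : f / 2 ^ k0 = 1 := by
      have h2 : f / 2 ^ k0 < 2 := by
        rw [Nat.div_lt_iff_lt_mul (Nat.two_pow_pos k0)]
        have hp : 2 ^ (k0 + 1) = 2 ^ k0 * 2 := pow_succ 2 k0
        omega
      have h3 : 1 ≤ f / 2 ^ k0 := (Nat.one_le_div_iff (Nat.two_pow_pos k0)).mpr hlow
      omega
    simp [h1]
  have heq : smear f 6 = 2 ^ (k0 + 1) - 1 := by
    apply Nat.eq_of_testBit_eq
    intro i
    rw [Nat.testBit_two_pow_sub_one]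
    by_cases hi : i < k0 + 1
    · have hb : (smear f 6).testBit i = true := by
        refine (smear_testBit f 6 i).mpr ⟨k0 - i, by norm_num; omega, ?_⟩
        rw [show i + (k0 - i) = k0 from by omega]
        exact htop
      rw [hb]
      simp [hi]
    · have : (smear f 6).testBit i = false := by
        rw [Bool.eq_false_iff]
        intro hc
        obtain ⟨s, _, hb⟩ := (smear_testBit f 6 i).mp hc
        have : f < 2 ^ (i + s) :=
          lt_of_lt_of_le hhigh (Nat.pow_le_pow_right (by norm_num) (by omega))
        exact absurd hb (by simp [Nat.testBit_lt_two_pow this])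
      simp [this, hi]
  rw [heq]
  have : 0 < 2 ^ (k0 + 1) := Nat.two_pow_pos _
  omega
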